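/- Let 0 < q < 1 and let m be a nonnegative integer. Then 2\zeta[m+2,1] = (m+2)\zeta[m+3] + (1-q)\, m\, \zeta[m+2] - \sum_{k=2}^{m+1} \zeta[m+3-k]\,\zeta[k]. -/

import Mathlib

noncomputable def qnum (q : ℝ) (k : ℕ) : ℝ := (1 - q ^ k) / (1 - q)

noncomputable def qz (q : ℝ) (s : ℕ) : ℝ :=
  ∑' k : ℕ+, q ^ ((s - 1) * (k : ℕ)) / (qnum q k) ^ s

noncomputable def qz1 (q : ℝ) (s : ℕ) : ℝ :=
  ∑' p : {p : ℕ × ℕ // p.2 < p.1 ∧ 0 < p.2},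
    q ^ ((s - 1) * p.1.1) / ((qnum q p.1.1) ^ s * qnum q p.1.2)

namespace QEuler

variable {q : ℝ}

theorem qnum_pos (hq0 : 0 < q) (hq1 : q < 1) {n : ℕ} (hn : 0 < n) : 0 < qnum q n := by
  have h1 : q ^ n ≤ q ^ 1 := pow_le_pow_of_le_one hq0.le hq1.le hn
  simp only [pow_one] at h1
  exact div_pos (by linarith) (by linarith)

theorem one_le_qnum (hq0 : 0 < q) (hq1 : q < 1) {n : ℕ} (hn : 0 < n) : 1 ≤ qnum q n := by
  have h1 : q ^ n ≤ q ^ 1 := pow_le_pow_of_le_one hq0.le hq1.le hn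
  simp only [pow_one] at h1
  rw [qnum, le_div_iff₀ (by linarith)]
  linarith

theorem one_le_qnum_pow (hq0 : 0 < q) (hq1 : q < 1) {n : ℕ} (hn : 0 < n) (s : ℕ) :
    1 ≤ qnum q n ^ s := one_le_pow₀ (one_le_qnum hq0 hq1 hn)

theorem qnum_ne (hq0 : 0 < q) (hq1 : q < 1) {n : ℕ} (hn : 0 < n) : qnum q n ≠ 0 :=
  (qnum_pos hq0 hq1 hn).ne'

theorem qnum_add (hq1 : q < 1) (a b : ℕ) :
    qnum q (a + b) = qnum q a + q ^ a * qnum q b := by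
  have h : (1:ℝ) - q ≠ 0 := by intro h; linarith [h]
  rw [qnum, qnum, qnum, mul_div_assoc', ← add_div, pow_add]
  ring

theorem one_sub_pow_eq (hq1 : q < 1) (n : ℕ) : 1 - q ^ n = (1 - q) * qnum q n := by
  have h : (1:ℝ) - q ≠ 0 := by intro h; linarith [h]
  rw [qnum, mul_div_assoc', mul_div_cancel_left₀ _ h]

theorem qnum_mono (hq0 : 0 < q) (hq1 : q < 1) {a b : ℕ} (hab : a ≤ b) :
    qnum q a ≤ qnum q b := by
  have h : q ^ b ≤ q ^ a := pow_le_pow_of_le_one hq0.le hq1.le hab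
  rw [qnum, qnum]
  gcongr

/-- `1/[n] = (1-q) + q^n/[n]` -/
theorem one_div_qnum (hq0 : 0 < q) (hq1 : q < 1) {n : ℕ} (hn : 0 < n) :
    1 / qnum q n = (1 - q) + q ^ n / qnum q n := by
  have h := qnum_ne hq0 hq1 hn
  have h1 : (1:ℝ) - q ≠ 0 := by intro h; linarith [h]
  have h2 : (1:ℝ) - q ^ n ≠ 0 := by
    intro hh; apply h; rw [qnum, hh]; simp
  rw [qnum]
  field_simp
  ring


section Summability

variable (hq0 : 0 < q) (hq1 : q < 1)

theorem summable_pnat_geom (hq0 : 0 < q) (hq1 : q < 1) :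
    Summable (fun k : ℕ+ => q ^ (k : ℕ)) :=
  (summable_geometric_of_lt_one hq0.le hq1).comp_injective PNat.coe_injective

theorem summable_single (hq0 : 0 < q) (hq1 : q < 1) {f : ℕ+ → ℝ}
    (h0 : ∀ k, 0 ≤ f k) (hle : ∀ k, f k ≤ q ^ (k : ℕ)) : Summable f :=
  Summable.of_nonneg_of_le h0 hle (summable_pnat_geom hq0 hq1)

theorem summable_pair_geom (hq0 : 0 < q) (hq1 : q < 1) :
    Summable (fun p : ℕ+ × ℕ+ => q ^ (p.1 : ℕ) * q ^ (p.2 : ℕ)) := by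
  have h := Summable.mul_of_nonneg (f := fun k : ℕ+ => q ^ (k : ℕ))
    (g := fun k : ℕ+ => q ^ (k : ℕ)) (summable_pnat_geom hq0 hq1) (summable_pnat_geom hq0 hq1)
    (fun k => by positivity) (fun k => by positivity)
  exact h

theorem summable_pair (hq0 : 0 < q) (hq1 : q < 1) {F : ℕ+ × ℕ+ → ℝ}
    (h0 : ∀ p, 0 ≤ F p) (hle : ∀ p, F p ≤ q ^ (p.1 : ℕ) * q ^ (p.2 : ℕ)) : Summable F :=
  Summable.of_nonneg_of_le h0 hle (summable_pair_geom hq0 hq1)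

end Summability


section Defs

noncomputable def phi (q : ℝ) (s : ℕ) (k : ℕ+) : ℝ :=
  q ^ ((s - 1) * (k : ℕ)) / qnum q (k : ℕ) ^ s

noncomputable def W (q : ℝ) (a b : ℕ) (p : ℕ+ × ℕ+) : ℝ :=
  q ^ ((a - 1) * ((p.1 : ℕ) + (p.2 : ℕ)) + (b - 1) * (p.1 : ℕ)) /
    (qnum q ((p.1 : ℕ) + (p.2 : ℕ)) ^ a * qnum q (p.1 : ℕ) ^ b)

noncomputable def Z (q : ℝ) (a b : ℕ) : ℝ := ∑' p : ℕ+ × ℕ+, W q a b p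

noncomputable def uu (q : ℝ) (d : ℕ+) : ℝ := q ^ (d : ℕ) / qnum q (d : ℕ)

noncomputable def cc (q : ℝ) (M : ℕ) (k : ℕ+) : ℝ := q ^ (M * (k : ℕ)) / qnum q (k : ℕ) ^ (M + 1)

theorem qz_eq (q : ℝ) (s : ℕ) : qz q s = ∑' k : ℕ+, phi q s k := rfl

end Defs

section Bounds

variable {q : ℝ}

theorem div_le_geom (hq0 : 0 < q) (hq1 : q < 1) {n e : ℕ} {D : ℝ} (he : n ≤ e) (hD : 1 ≤ D) :
    q ^ e / D ≤ q ^ n := by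
  calc q ^ e / D ≤ q ^ e := div_le_self (pow_nonneg hq0.le _) hD
  _ ≤ q ^ n := pow_le_pow_of_le_one hq0.le hq1.le he

theorem phi_nonneg (hq0 : 0 < q) (hq1 : q < 1) (s : ℕ) (k : ℕ+) : 0 ≤ phi q s k := by
  have h := qnum_pos hq0 hq1 k.pos
  exact div_nonneg (pow_nonneg hq0.le _) (pow_nonneg h.le _)

theorem phi_le (hq0 : 0 < q) (hq1 : q < 1) {s : ℕ} (hs : 2 ≤ s) (k : ℕ+) :
    phi q s k ≤ q ^ (k : ℕ) :=
  div_le_geom hq0 hq1 (Nat.le_mul_of_pos_left _ (by omega)) (one_le_qnum_pow hq0 hq1 k.pos s)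

theorem summable_phi (hq0 : 0 < q) (hq1 : q < 1) {s : ℕ} (hs : 2 ≤ s) :
    Summable (phi q s) :=
  summable_single hq0 hq1 (phi_nonneg hq0 hq1 s) (phi_le hq0 hq1 hs)

theorem W_nonneg (hq0 : 0 < q) (hq1 : q < 1) (a b : ℕ) (p : ℕ+ × ℕ+) : 0 ≤ W q a b p := by
  have h1 : (0:ℝ) < qnum q ((p.1 : ℕ) + (p.2 : ℕ)) := qnum_pos hq0 hq1 (by positivity)
  have h2 : (0:ℝ) < qnum q (p.1 : ℕ) := qnum_pos hq0 hq1 p.1.pos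
  exact div_nonneg (pow_nonneg hq0.le _) (mul_nonneg (pow_nonneg h1.le _) (pow_nonneg h2.le _))

theorem W_le (hq0 : 0 < q) (hq1 : q < 1) {a b : ℕ} (ha : 2 ≤ a) (hb : 1 ≤ b) (p : ℕ+ × ℕ+) :
    W q a b p ≤ q ^ (p.1 : ℕ) * q ^ (p.2 : ℕ) := by
  have hD : 1 ≤ qnum q ((p.1 : ℕ) + (p.2 : ℕ)) ^ a * qnum q (p.1 : ℕ) ^ b := by
    have := one_le_qnum_pow hq0 hq1 (n := (p.1 : ℕ) + (p.2 : ℕ)) (by positivity) a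
    have := one_le_qnum_pow hq0 hq1 p.1.pos b
    nlinarith
  calc W q a b p ≤ q ^ ((p.1 : ℕ) + (p.2 : ℕ)) :=
        div_le_geom hq0 hq1 (by
          have h1 : 1 ≤ a - 1 := by omega
          calc (p.1 : ℕ) + (p.2 : ℕ) = 1 * ((p.1 : ℕ) + (p.2 : ℕ)) := by ring
          _ ≤ (a-1) * ((p.1 : ℕ) + (p.2 : ℕ)) := Nat.mul_le_mul_right _ h1
          _ ≤ (a-1) * ((p.1 : ℕ) + (p.2 : ℕ)) + (b-1) * (p.1 : ℕ) := Nat.le_add_right _ _) hD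
  _ = q ^ (p.1 : ℕ) * q ^ (p.2 : ℕ) := pow_add q _ _

theorem summable_W (hq0 : 0 < q) (hq1 : q < 1) {a b : ℕ} (ha : 2 ≤ a) (hb : 1 ≤ b) :
    Summable (W q a b) :=
  summable_pair hq0 hq1 (W_nonneg hq0 hq1 a b) (W_le hq0 hq1 ha hb)

theorem uu_nonneg (hq0 : 0 < q) (hq1 : q < 1) (d : ℕ+) : 0 ≤ uu q d :=
  div_nonneg (by positivity) (qnum_pos hq0 hq1 d.pos).le

theorem uu_le (hq0 : 0 < q) (hq1 : q < 1) (d : ℕ+) : uu q d ≤ q ^ (d : ℕ) :=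
  div_le_geom hq0 hq1 le_rfl (one_le_qnum hq0 hq1 d.pos)

theorem summable_uu (hq0 : 0 < q) (hq1 : q < 1) : Summable (uu q) :=
  summable_single hq0 hq1 (uu_nonneg hq0 hq1) (uu_le hq0 hq1)

theorem cc_nonneg (hq0 : 0 < q) (hq1 : q < 1) (M : ℕ) (k : ℕ+) : 0 ≤ cc q M k := by
  have h := qnum_pos hq0 hq1 k.pos
  exact div_nonneg (pow_nonneg hq0.le _) (pow_nonneg h.le _)

theorem cc_le (hq0 : 0 < q) (hq1 : q < 1) {M : ℕ} (hM : 1 ≤ M) (k : ℕ+) :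
    cc q M k ≤ q ^ (k : ℕ) :=
  div_le_geom hq0 hq1 (Nat.le_mul_of_pos_left _ (by omega)) (one_le_qnum_pow hq0 hq1 k.pos _)

end Bounds

section Split

theorem pnat_lt_add_left (k d : ℕ+) : k < d + k := by
  rw [← PNat.coe_lt_coe]
  have := d.pos
  simp only [PNat.add_coe]
  omega

theorem pnat_lt_add_right (a b : ℕ+) : a < a + b := by
  rw [← PNat.coe_lt_coe]
  have := b.pos
  simp only [PNat.add_coe]
  omega

theorem emb1_inj : Function.Injective (fun p : ℕ+ × ℕ+ => ((p.1 + p.2 : ℕ+), p.1)) := by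
  intro p r h
  rw [Prod.ext_iff] at h ⊢
  obtain ⟨h1, h2⟩ := h
  refine ⟨h2, ?_⟩
  have h1' : (p.1 : ℕ) + (p.2 : ℕ) = (r.1 : ℕ) + (r.2 : ℕ) := by
    have := congrArg (fun x : ℕ+ => (x : ℕ)) h1
    simpa [PNat.add_coe] using this
  have h2' : (p.1 : ℕ) = (r.1 : ℕ) := congrArg _ h2
  exact PNat.coe_injective (by omega)

theorem tsum_ite_upper (F : ℕ+ × ℕ+ → ℝ) :
    ∑' p : ℕ+ × ℕ+, (if p.2 < p.1 then F p else 0)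
      = ∑' p : ℕ+ × ℕ+, F (p.1 + p.2, p.1) := by
  rw [← Function.Injective.tsum_eq (g := fun p : ℕ+ × ℕ+ => ((p.1 + p.2 : ℕ+), p.1)) emb1_inj ?_]
  · apply tsum_congr
    intro p
    simp only
    rw [if_pos (pnat_lt_add_right p.1 p.2)]
  · intro x hx
    by_cases hlt : x.2 < x.1
    · refine ⟨(x.2, x.1 - x.2), ?_⟩
      have hlt' : (x.2 : ℕ) < (x.1 : ℕ) := by exact_mod_cast hlt
      refine Prod.ext ?_ rfl
      apply PNat.coe_injective
      simp only [PNat.add_coe, PNat.sub_coe, if_pos hlt]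
      omega
    · exact absurd (if_neg hlt) hx

theorem tsum_ite_lower (F : ℕ+ × ℕ+ → ℝ) :
    ∑' p : ℕ+ × ℕ+, (if p.1 < p.2 then F p else 0)
      = ∑' p : ℕ+ × ℕ+, F (p.1, p.1 + p.2) := by
  rw [← Function.Injective.tsum_eq (g := fun p : ℕ+ × ℕ+ => (p.1, (p.1 + p.2 : ℕ+))) ?_ ?_]
  · apply tsum_congr
    intro p
    simp only
    rw [if_pos (pnat_lt_add_right p.1 p.2)]
  · intro p r h
    rw [Prod.ext_iff] at h ⊢
    obtain ⟨h1, h2⟩ := h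
    refine ⟨h1, ?_⟩
    have h2' : (p.1 : ℕ) + (p.2 : ℕ) = (r.1 : ℕ) + (r.2 : ℕ) := by
      have := congrArg (fun x : ℕ+ => (x : ℕ)) h2
      simpa [PNat.add_coe] using this
    have h1' : (p.1 : ℕ) = (r.1 : ℕ) := congrArg _ h1
    exact PNat.coe_injective (by omega)
  · intro x hx
    by_cases hlt : x.1 < x.2
    · refine ⟨(x.1, x.2 - x.1), ?_⟩
      have hlt' : (x.1 : ℕ) < (x.2 : ℕ) := by exact_mod_cast hlt
      refine Prod.ext rfl ?_
      apply PNat.coe_injective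
      simp only [PNat.add_coe, PNat.sub_coe, if_pos hlt]
      omega
    · exact absurd (if_neg hlt) hx

theorem tsum_ite_diag (F : ℕ+ × ℕ+ → ℝ) :
    ∑' p : ℕ+ × ℕ+, (if p.1 = p.2 then F p else 0) = ∑' k : ℕ+, F (k, k) := by
  rw [← Function.Injective.tsum_eq (g := fun k : ℕ+ => ((k : ℕ+), k)) ?_ ?_]
  · apply tsum_congr; intro k; simp
  · intro a b h
    exact (Prod.ext_iff.mp h).1
  · intro x hx
    by_cases he : x.1 = x.2
    · exact ⟨x.1, Prod.ext rfl he⟩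
    · exact absurd (if_neg he) hx

variable {q : ℝ}

theorem tsum_three_split (hq0 : 0 < q) (hq1 : q < 1) {F : ℕ+ × ℕ+ → ℝ}
    (hF : Summable F) (h0 : ∀ p, 0 ≤ F p) :
    ∑' p : ℕ+ × ℕ+, F p
      = ∑' p : ℕ+ × ℕ+, F (p.1 + p.2, p.1) + ∑' p : ℕ+ × ℕ+, F (p.1, p.1 + p.2)
        + ∑' k : ℕ+, F (k, k) := by
  have hs1 : Summable (fun p : ℕ+ × ℕ+ => if p.2 < p.1 then F p else 0) := by
    apply Summable.of_nonneg_of_le (g := fun p => if p.2 < p.1 then F p else 0) ?_ ?_ hF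
    · intro p; split <;> simp [h0 p]
    · intro p; split
      · exact le_refl _
      · exact h0 p
  have hs2 : Summable (fun p : ℕ+ × ℕ+ => if p.1 < p.2 then F p else 0) := by
    apply Summable.of_nonneg_of_le (g := fun p => if p.1 < p.2 then F p else 0) ?_ ?_ hF
    · intro p; split <;> simp [h0 p]
    · intro p; split
      · exact le_refl _
      · exact h0 p
  have hs3 : Summable (fun p : ℕ+ × ℕ+ => if p.1 = p.2 then F p else 0) := by
    apply Summable.of_nonneg_of_le (g := fun p => if p.1 = p.2 then F p else 0) ?_ ?_ hF
    · intro p; split <;> simp [h0 p]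
    · intro p; split
      · exact le_refl _
      · exact h0 p
  have hpt : ∀ p : ℕ+ × ℕ+, F p = (if p.2 < p.1 then F p else 0)
      + (if p.1 < p.2 then F p else 0) + (if p.1 = p.2 then F p else 0) := by
    intro p
    rcases lt_trichotomy p.1 p.2 with h | h | h
    · rw [if_neg (by exact lt_asymm h), if_pos h, if_neg (by exact ne_of_lt h)]; ring
    · rw [if_neg (by rw [h]; exact lt_irrefl _), if_neg (by rw [h]; exact lt_irrefl _), if_pos h]
      ring
    · rw [if_pos h, if_neg (by exact lt_asymm h), if_neg (by exact (ne_of_lt h).symm)]; ring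
  calc ∑' p : ℕ+ × ℕ+, F p
      = ∑' p : ℕ+ × ℕ+, ((if p.2 < p.1 then F p else 0)
        + (if p.1 < p.2 then F p else 0) + (if p.1 = p.2 then F p else 0)) :=
        tsum_congr hpt
    _ = ∑' p : ℕ+ × ℕ+, (if p.2 < p.1 then F p else 0)
        + ∑' p : ℕ+ × ℕ+, (if p.1 < p.2 then F p else 0)
        + ∑' p : ℕ+ × ℕ+, (if p.1 = p.2 then F p else 0) := by
        rw [Summable.tsum_add (hs1.add hs2) hs3, Summable.tsum_add hs1 hs2]
    _ = _ := by rw [tsum_ite_upper, tsum_ite_lower, tsum_ite_diag]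

end Split


section Telescope

variable {q : ℝ}

theorem pnat_add_inj (k : ℕ+) : Function.Injective (fun d : ℕ+ => d + k) := by
  intro a b h
  have h' := congrArg (fun x : ℕ+ => (x : ℕ)) h
  simp only [PNat.add_coe] at h'
  exact PNat.coe_injective (by omega)

theorem tsum_shift (hq0 : 0 < q) (hq1 : q < 1) (k : ℕ+) :
    ∑' d : ℕ+, uu q (d + k) = (∑' d : ℕ+, uu q d) - ∑ j ∈ Finset.Icc 1 k, uu q j := by
  have hsu := summable_uu hq0 hq1
  have hsupp : Function.support (fun j : ℕ+ => if k < j then uu q j else 0)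
      ⊆ Set.range (fun d : ℕ+ => d + k) := by
    intro x hx
    by_cases h : k < x
    · refine ⟨x - k, ?_⟩
      apply PNat.coe_injective
      have h' : (k : ℕ) < (x : ℕ) := by exact_mod_cast h
      simp only [PNat.add_coe, PNat.sub_coe, if_pos h]
      omega
    · exact absurd (if_neg h) hx
  have h1 : ∑' d : ℕ+, uu q (d + k) = ∑' j : ℕ+, (if k < j then uu q j else 0) :=
    calc ∑' d : ℕ+, uu q (d + k)
        = ∑' d : ℕ+, (if k < d + k then uu q (d + k) else 0) :=
          tsum_congr fun d => (if_pos (pnat_lt_add_left k d)).symm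
      _ = ∑' j : ℕ+, (if k < j then uu q j else 0) :=
          Function.Injective.tsum_eq (pnat_add_inj k) hsupp
  have hv : Summable (fun j : ℕ+ => if k < j then uu q j else 0) := by
    apply Summable.of_nonneg_of_le ?_ ?_ hsu
    · intro j; split; exacts [uu_nonneg hq0 hq1 j, le_refl 0]
    · intro j; split; exacts [le_refl _, uu_nonneg hq0 hq1 j]
  have hw : Summable (fun j : ℕ+ => if k < j then 0 else uu q j) := by
    apply Summable.of_nonneg_of_le ?_ ?_ hsu
    · intro j; split; exacts [le_refl 0, uu_nonneg hq0 hq1 j]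
    · intro j; split; exacts [uu_nonneg hq0 hq1 j, le_refl _]
  have hsplit : ∑' j : ℕ+, uu q j
      = ∑' j : ℕ+, (if k < j then uu q j else 0) + ∑' j : ℕ+, (if k < j then 0 else uu q j) := by
    rw [← Summable.tsum_add hv hw]
    exact tsum_congr fun j => by by_cases h : k < j <;> simp [h]
  have hw2 : ∑' j : ℕ+, (if k < j then 0 else uu q j) = ∑ j ∈ Finset.Icc 1 k, uu q j := by
    rw [tsum_eq_sum (s := Finset.Icc 1 k) ?_]
    · refine Finset.sum_congr rfl fun j hj => ?_
      rw [Finset.mem_Icc] at hj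
      rw [if_neg (not_lt.mpr hj.2)]
    · intro j hj
      rw [Finset.mem_Icc] at hj
      push_neg at hj
      rw [if_pos (hj j.one_le)]
  rw [h1, hsplit, hw2]
  ring

theorem telescope (hq0 : 0 < q) (hq1 : q < 1) (k : ℕ+) :
    ∑' d : ℕ+, (uu q d - uu q (d + k)) = ∑ j ∈ Finset.Icc 1 k, uu q j := by
  have hsu := summable_uu hq0 hq1
  have hshift : Summable (fun d : ℕ+ => uu q (d + k)) := hsu.comp_injective (pnat_add_inj k)
  rw [Summable.tsum_sub hsu hshift, tsum_shift hq0 hq1 k]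
  ring

end Telescope

section Fubini

variable {q : ℝ}

theorem tsum_upper_fubini (hq0 : 0 < q) (hq1 : q < 1) {K v : ℕ+ → ℝ}
    (hK0 : ∀ j, 0 ≤ K j) (hKle : ∀ j, K j ≤ q ^ (j : ℕ))
    (hv0 : ∀ d, 0 ≤ v d) (hvle : ∀ d, v d ≤ q ^ (d : ℕ)) :
    ∑' p : ℕ+ × ℕ+, K (p.1 + p.2) * v p.1
      = ∑' j : ℕ+, K j * ∑ d ∈ Finset.Ico 1 j, v d := by
  have hsum : Summable (fun p : ℕ+ × ℕ+ => if p.2 < p.1 then K p.1 * v p.2 else 0) := by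
    apply summable_pair hq0 hq1
    · intro p; split
      exacts [mul_nonneg (hK0 _) (hv0 _), le_refl 0]
    · intro p; split
      · exact mul_le_mul (hKle _) (hvle _) (hv0 _) (pow_nonneg hq0.le _)
      · positivity
  rw [← tsum_ite_upper (fun p : ℕ+ × ℕ+ => K p.1 * v p.2)]
  rw [Summable.tsum_prod' hsum hsum.prod_factor]
  refine tsum_congr fun j => ?_
  rw [tsum_eq_sum (s := Finset.Ico 1 j) ?_, Finset.mul_sum]
  · refine Finset.sum_congr rfl fun d hd => ?_
    rw [Finset.mem_Ico] at hd
    rw [if_pos hd.2]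
  · intro d hd
    rw [Finset.mem_Ico] at hd
    push_neg at hd
    rw [if_neg (not_lt.mpr (hd d.one_le))]

end Fubini

section StepI

def eSub : ℕ+ × ℕ+ ≃ {p : ℕ × ℕ // p.2 < p.1 ∧ 0 < p.2} where
  toFun x := ⟨((x.1 : ℕ) + (x.2 : ℕ), (x.1 : ℕ)), by
    constructor
    · have := x.2.pos; omega
    · exact x.1.pos⟩
  invFun p := (⟨p.1.2, p.2.2⟩, ⟨p.1.1 - p.1.2, by have := p.2.1; omega⟩)
  left_inv x := by
    refine Prod.ext (PNat.coe_injective ?_) (PNat.coe_injective ?_) <;> simp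
  right_inv p := by
    refine Subtype.ext (Prod.ext ?_ rfl)
    show p.1.2 + (p.1.1 - p.1.2) = p.1.1
    have := p.2.1
    omega

theorem qz1_eq_Z (q : ℝ) (s : ℕ) : qz1 q s = Z q s 1 := by
  rw [qz1, Z,
    ← Equiv.tsum_eq eSub (fun p : {p : ℕ × ℕ // p.2 < p.1 ∧ 0 < p.2} =>
      q ^ ((s - 1) * p.1.1) / ((qnum q p.1.1) ^ s * qnum q p.1.2))]
  refine tsum_congr fun x => ?_
  simp only [eSub, Equiv.coe_fn_mk, W, pow_one]
  norm_num

end StepI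


section Geom

theorem geom_claim (x y A B C : ℝ) (hA : A ≠ 0) (hB : B ≠ 0) (hC : C ≠ 0)
    (hrel : C = B + y * A) :
    ∀ M : ℕ, 1 ≤ M →
    ∑ a ∈ Finset.Icc 2 (M + 1), (x*y)^(a-1) * x^(M+1-a) / (C^a * A^(M+2-a))
      = x^M / A^(M+1) * (1/B - 1/C) - x^M * y^(M+1) / (C^(M+1) * B) := by
  intro M
  induction M with
  | zero => omega
  | succ M IH =>
    intro _
    by_cases hM : 1 ≤ M
    · have IH' := IH hM
      rw [Finset.sum_Icc_succ_top (by omega : 2 ≤ M + 2)]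
      have hcong : ∑ a ∈ Finset.Icc 2 (M+1), (x*y)^(a-1) * x^(M+1+1-a) / (C^a * A^(M+1+2-a))
          = ∑ a ∈ Finset.Icc 2 (M+1), (x/A) * ((x*y)^(a-1) * x^(M+1-a) / (C^a * A^(M+2-a))) := by
        refine Finset.sum_congr rfl fun a ha => ?_
        rw [Finset.mem_Icc] at ha
        have h1 : M+1+1-a = (M+1-a)+1 := by omega
        have h2 : M+1+2-a = (M+1-a)+2 := by omega
        rw [h1, h2]
        generalize M+1-a = b
        field_simp
        ring
      rw [hcong, ← Finset.mul_sum, IH']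
      have e1 : M+1+1-1 = M+1 := by omega
      have e2 : M+1+1-(M+2) = 0 := by omega
      have e3 : M+1+2-(M+2) = 1 := by omega
      rw [e1, e2, e3, pow_zero, pow_one, mul_one]
      field_simp
      subst hrel
      ring
    · have hM0 : M = 0 := by omega
      subst hM0
      subst hrel
      norm_num
      field_simp
      ring

variable {q : ℝ}

theorem summand_eq (hq0 : 0 < q) (hq1 : q < 1) {M : ℕ} (hM : 1 ≤ M) (p : ℕ+ × ℕ+) :
    ∑ a ∈ Finset.Icc 2 (M+1), W q a (M+2-a) p
      = cc q M p.1 * (uu q p.2 - uu q (p.2 + p.1)) - cc q M (p.1 + p.2) * uu q p.2 := by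
  have hA : qnum q (p.1 : ℕ) ≠ 0 := qnum_ne hq0 hq1 p.1.pos
  have hB : qnum q (p.2 : ℕ) ≠ 0 := qnum_ne hq0 hq1 p.2.pos
  have hKD : 0 < (p.1 : ℕ) + (p.2 : ℕ) := Nat.add_pos_left p.1.pos _
  have hC : qnum q ((p.1 : ℕ) + (p.2 : ℕ)) ≠ 0 := qnum_ne hq0 hq1 hKD
  have hrel : qnum q ((p.1 : ℕ) + (p.2 : ℕ))
      = qnum q (p.2 : ℕ) + q ^ (p.2 : ℕ) * qnum q (p.1 : ℕ) := by
    rw [Nat.add_comm]; exact qnum_add hq1 _ _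
  have hgeom := geom_claim (q ^ (p.1 : ℕ)) (q ^ (p.2 : ℕ)) (qnum q (p.1 : ℕ))
    (qnum q (p.2 : ℕ)) (qnum q ((p.1 : ℕ) + (p.2 : ℕ))) hA hB hC hrel M hM
  have hstep1 : ∑ a ∈ Finset.Icc 2 (M+1), W q a (M+2-a) p
      = ∑ a ∈ Finset.Icc 2 (M+1), (q ^ (p.1 : ℕ) * q ^ (p.2 : ℕ))^(a-1) * (q ^ (p.1 : ℕ))^(M+1-a)
          / (qnum q ((p.1 : ℕ) + (p.2 : ℕ))^a * qnum q (p.1 : ℕ)^(M+2-a)) := by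
    refine Finset.sum_congr rfl fun a ha => ?_
    rw [Finset.mem_Icc] at ha
    rw [W]
    congr 1
    rw [← pow_add q, ← pow_mul, ← pow_mul, ← pow_add]
    congr 1
    have h : M+2-a-1 = M+1-a := by omega
    rw [h]
    ring
  rw [hstep1, hgeom]
  have hcoe1 : ((p.2 + p.1 : ℕ+) : ℕ) = (p.1 : ℕ) + (p.2 : ℕ) := by
    rw [PNat.add_coe]; omega
  have hcoe2 : ((p.1 + p.2 : ℕ+) : ℕ) = (p.1 : ℕ) + (p.2 : ℕ) := by
    rw [PNat.add_coe]
  have hcc1 : cc q M p.1 = (q ^ (p.1 : ℕ))^M / qnum q (p.1 : ℕ) ^ (M+1) := by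
    rw [cc, ← pow_mul, Nat.mul_comm]
  have huu : uu q p.2 - uu q (p.2 + p.1)
      = 1/qnum q (p.2 : ℕ) - 1/qnum q ((p.1 : ℕ) + (p.2 : ℕ)) := by
    rw [one_div_qnum hq0 hq1 p.2.pos, one_div_qnum hq0 hq1 hKD, uu, uu, hcoe1]
    ring
  have hcc2 : cc q M (p.1 + p.2) * uu q p.2
      = (q ^ (p.1 : ℕ))^M * (q ^ (p.2 : ℕ))^(M+1)
        / (qnum q ((p.1 : ℕ) + (p.2 : ℕ))^(M+1) * qnum q (p.2 : ℕ)) := by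
    rw [cc, uu, hcoe2, div_mul_div_comm, ← pow_add]
    congr 1
    rw [← pow_mul, ← pow_mul, ← pow_add]
    congr 1
    ring
  rw [hcc1, huu, hcc2]

end Geom


section SumFormula

variable {q : ℝ}

theorem uu_sub_nonneg (hq0 : 0 < q) (hq1 : q < 1) (k d : ℕ+) :
    0 ≤ uu q d - uu q (d + k) := by
  have hcoe : ((d + k : ℕ+) : ℕ) = (d : ℕ) + (k : ℕ) := PNat.add_coe d k
  have h1 := one_div_qnum hq0 hq1 d.pos
  have h2 := one_div_qnum hq0 hq1 (n := (d : ℕ) + (k : ℕ)) (by have := d.pos; omega)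
  have heq : uu q d - uu q (d + k)
      = 1 / qnum q (d : ℕ) - 1 / qnum q ((d : ℕ) + (k : ℕ)) := by
    rw [uu, uu, hcoe]; rw [h1, h2]; ring
  rw [heq, sub_nonneg]
  apply one_div_le_one_div_of_le (qnum_pos hq0 hq1 d.pos)
  exact qnum_mono hq0 hq1 (Nat.le_add_right _ _)

theorem ff_le (hq0 : 0 < q) (hq1 : q < 1) {M : ℕ} (hM : 1 ≤ M) (p : ℕ+ × ℕ+) :
    cc q M p.1 * (uu q p.2 - uu q (p.2 + p.1)) ≤ q ^ (p.1 : ℕ) * q ^ (p.2 : ℕ) := by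
  apply mul_le_mul (cc_le hq0 hq1 hM p.1) ?_ (uu_sub_nonneg hq0 hq1 p.1 p.2)
    (pow_nonneg hq0.le _)
  have := uu_nonneg hq0 hq1 (p.2 + p.1)
  have := uu_le hq0 hq1 p.2
  linarith

theorem summable_ff (hq0 : 0 < q) (hq1 : q < 1) {M : ℕ} (hM : 1 ≤ M) :
    Summable (fun p : ℕ+ × ℕ+ => cc q M p.1 * (uu q p.2 - uu q (p.2 + p.1))) :=
  summable_pair hq0 hq1
    (fun p => mul_nonneg (cc_nonneg hq0 hq1 M p.1) (uu_sub_nonneg hq0 hq1 p.1 p.2))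
    (ff_le hq0 hq1 hM)

theorem gg_le (hq0 : 0 < q) (hq1 : q < 1) {M : ℕ} (hM : 1 ≤ M) (p : ℕ+ × ℕ+) :
    cc q M (p.1 + p.2) * uu q p.2 ≤ q ^ (p.1 : ℕ) * q ^ (p.2 : ℕ) := by
  apply mul_le_mul ?_ (uu_le hq0 hq1 p.2) (uu_nonneg hq0 hq1 p.2) (pow_nonneg hq0.le _)
  calc cc q M (p.1 + p.2) ≤ q ^ ((p.1 + p.2 : ℕ+) : ℕ) := cc_le hq0 hq1 hM _
  _ ≤ q ^ (p.1 : ℕ) := by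
      apply pow_le_pow_of_le_one hq0.le hq1.le
      rw [PNat.add_coe]
      omega

theorem summable_gg (hq0 : 0 < q) (hq1 : q < 1) {M : ℕ} (hM : 1 ≤ M) :
    Summable (fun p : ℕ+ × ℕ+ => cc q M (p.1 + p.2) * uu q p.2) :=
  summable_pair hq0 hq1
    (fun p => mul_nonneg (cc_nonneg hq0 hq1 M _) (uu_nonneg hq0 hq1 p.2))
    (gg_le hq0 hq1 hM)

theorem cc_mul_uu (hq0 : 0 < q) (hq1 : q < 1) (M : ℕ) (k : ℕ+) :
    cc q M k * uu q k = phi q (M + 2) k := by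
  rw [cc, uu, phi, div_mul_div_comm, ← pow_add, ← pow_succ]
  congr 1
  have h : M + 2 - 1 = M + 1 := by omega
  rw [h]
  ring

theorem tsum_ff (hq0 : 0 < q) (hq1 : q < 1) {M : ℕ} (hM : 1 ≤ M) :
    ∑' p : ℕ+ × ℕ+, cc q M p.1 * (uu q p.2 - uu q (p.2 + p.1))
      = qz q (M + 2) + ∑' j : ℕ+, cc q M j * ∑ d ∈ Finset.Ico 1 j, uu q d := by
  have hff := summable_ff hq0 hq1 hM
  rw [Summable.tsum_prod' hff hff.prod_factor]
  have hinner : ∀ k : ℕ+, ∑' d : ℕ+, cc q M k * (uu q d - uu q (d + k))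
      = cc q M k * uu q k + cc q M k * ∑ d ∈ Finset.Ico 1 k, uu q d := by
    intro k
    rw [tsum_mul_left, telescope hq0 hq1 k]
    have hicc : Finset.Icc 1 k = insert k (Finset.Ico 1 k) := (Finset.Ico_insert_right k.one_le).symm
    rw [hicc, Finset.sum_insert (by simp), mul_add]
  have hs1 : Summable (fun k : ℕ+ => cc q M k * uu q k) := by
    apply summable_single hq0 hq1
    · intro k; exact mul_nonneg (cc_nonneg hq0 hq1 M k) (uu_nonneg hq0 hq1 k)
    · intro k
      calc cc q M k * uu q k ≤ q ^ (k : ℕ) * 1 := by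
            apply mul_le_mul (cc_le hq0 hq1 hM k) ?_ (uu_nonneg hq0 hq1 k) (pow_nonneg hq0.le _)
            calc uu q k ≤ q ^ (k : ℕ) := uu_le hq0 hq1 k
            _ ≤ 1 := pow_le_one₀ hq0.le hq1.le
      _ = q ^ (k : ℕ) := mul_one _
  have hs2 : Summable (fun k : ℕ+ => cc q M k * ∑ d ∈ Finset.Ico 1 k, uu q d) := by
    apply Summable.of_nonneg_of_le (g := fun k : ℕ+ => cc q M k * ∑ d ∈ Finset.Ico 1 k, uu q d)
      ?_ ?_ ((summable_pnat_geom hq0 hq1).mul_right (∑' d : ℕ+, uu q d))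
    · intro k
      exact mul_nonneg (cc_nonneg hq0 hq1 M k)
        (Finset.sum_nonneg fun d _ => uu_nonneg hq0 hq1 d)
    · intro k
      apply mul_le_mul (cc_le hq0 hq1 hM k) ?_
        (Finset.sum_nonneg fun d _ => uu_nonneg hq0 hq1 d) (pow_nonneg hq0.le _)
      exact Summable.sum_le_tsum _ (fun d _ => uu_nonneg hq0 hq1 d) (summable_uu hq0 hq1)
  calc ∑' k : ℕ+, ∑' d : ℕ+, cc q M k * (uu q d - uu q (d + k))
      = ∑' k : ℕ+, (cc q M k * uu q k + cc q M k * ∑ d ∈ Finset.Ico 1 k, uu q d) :=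
        tsum_congr hinner
    _ = ∑' k : ℕ+, cc q M k * uu q k + ∑' k : ℕ+, cc q M k * ∑ d ∈ Finset.Ico 1 k, uu q d :=
        Summable.tsum_add hs1 hs2
    _ = qz q (M + 2) + ∑' j : ℕ+, cc q M j * ∑ d ∈ Finset.Ico 1 j, uu q d := by
        rw [qz_eq]
        congr 1
        exact tsum_congr (cc_mul_uu hq0 hq1 M)

theorem tsum_gg (hq0 : 0 < q) (hq1 : q < 1) {M : ℕ} (hM : 1 ≤ M) :
    ∑' p : ℕ+ × ℕ+, cc q M (p.1 + p.2) * uu q p.2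
      = ∑' j : ℕ+, cc q M j * ∑ d ∈ Finset.Ico 1 j, uu q d := by
  have hswap : ∑' p : ℕ+ × ℕ+, cc q M (p.1 + p.2) * uu q p.2
      = ∑' p : ℕ+ × ℕ+, cc q M (p.1 + p.2) * uu q p.1 := by
    rw [← Equiv.tsum_eq (Equiv.prodComm ℕ+ ℕ+)
      (fun p : ℕ+ × ℕ+ => cc q M (p.1 + p.2) * uu q p.2)]
    refine tsum_congr fun p => ?_
    simp only [Equiv.prodComm_apply, Prod.swap_prod_mk, Prod.fst_swap, Prod.snd_swap]
    rw [add_comm]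
  rw [hswap]
  exact tsum_upper_fubini hq0 hq1 (cc_nonneg hq0 hq1 M) (cc_le hq0 hq1 hM)
    (uu_nonneg hq0 hq1) (uu_le hq0 hq1)

theorem sum_formula (hq0 : 0 < q) (hq1 : q < 1) {M : ℕ} (hM : 1 ≤ M) :
    ∑ a ∈ Finset.Icc 2 (M + 1), Z q a (M + 2 - a) = qz q (M + 2) := by
  have hsummable : ∀ a ∈ Finset.Icc 2 (M + 1), Summable (fun p => W q a (M + 2 - a) p) := by
    intro a ha
    rw [Finset.mem_Icc] at ha
    exact summable_W hq0 hq1 ha.1 (by omega)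
  calc ∑ a ∈ Finset.Icc 2 (M + 1), Z q a (M + 2 - a)
      = ∑' p : ℕ+ × ℕ+, ∑ a ∈ Finset.Icc 2 (M + 1), W q a (M + 2 - a) p :=
        (Summable.tsum_finsetSum hsummable).symm
    _ = ∑' p : ℕ+ × ℕ+, (cc q M p.1 * (uu q p.2 - uu q (p.2 + p.1))
          - cc q M (p.1 + p.2) * uu q p.2) :=
        tsum_congr (summand_eq hq0 hq1 hM)
    _ = ∑' p : ℕ+ × ℕ+, cc q M p.1 * (uu q p.2 - uu q (p.2 + p.1))
          - ∑' p : ℕ+ × ℕ+, cc q M (p.1 + p.2) * uu q p.2 :=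
        Summable.tsum_sub (summable_ff hq0 hq1 hM) (summable_gg hq0 hq1 hM)
    _ = qz q (M + 2) := by
        rw [tsum_ff hq0 hq1 hM, tsum_gg hq0 hq1 hM]
        ring

end SumFormula


section Stuffle

variable {q : ℝ}

theorem phi_mul_phi (a b : ℕ) (p : ℕ+ × ℕ+) :
    phi q a (p.1 + p.2) * phi q b p.1 = W q a b p := by
  rw [phi, phi, W, PNat.add_coe, div_mul_div_comm, ← pow_add]

theorem diag_core (hq0 : 0 < q) (hq1 : q < 1) (e : ℕ) (k : ℕ+) :
    q ^ (e * (k : ℕ)) / qnum q (k : ℕ) ^ (e + 2)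
      = q ^ ((e + 1) * (k : ℕ)) / qnum q (k : ℕ) ^ (e + 2)
        + (1 - q) * (q ^ (e * (k : ℕ)) / qnum q (k : ℕ) ^ (e + 1)) := by
  have hA : qnum q (k : ℕ) ≠ 0 := qnum_ne hq0 hq1 k.pos
  have h1q : 1 - q ^ (k : ℕ) = (1 - q) * qnum q (k : ℕ) := one_sub_pow_eq hq1 _
  have hY : q ^ ((e + 1) * (k : ℕ)) = q ^ (e * (k : ℕ)) * q ^ (k : ℕ) := by
    rw [← pow_add]; congr 1; ring
  have hA1 : qnum q (k : ℕ) ^ (e + 1) ≠ 0 := pow_ne_zero _ hA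
  rw [hY, pow_succ (qnum q (k : ℕ)) (e + 1)]
  have h2 : (1 - q) * (q ^ (e * (k : ℕ)) / qnum q (k : ℕ) ^ (e + 1))
      = (1 - q ^ (k : ℕ)) * q ^ (e * (k : ℕ)) / (qnum q (k : ℕ) ^ (e + 1) * qnum q (k : ℕ)) := by
    rw [h1q]
    field_simp
  rw [h2, ← add_div]
  congr 1
  ring

theorem diag_decomp (hq0 : 0 < q) (hq1 : q < 1) {a b : ℕ} (ha : 2 ≤ a) (hb : 2 ≤ b) (k : ℕ+) :
    phi q a k * phi q b k = phi q (a + b) k + (1 - q) * phi q (a + b - 1) k := by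
  obtain ⟨e, he⟩ : ∃ e, a + b = e + 2 := ⟨a + b - 2, by omega⟩
  have h3 : a + b - 1 - 1 = e := by omega
  have h2 : a + b - 1 = e + 1 := by omega
  rw [phi, phi, phi, phi, div_mul_div_comm, ← pow_add, ← pow_add]
  rw [show (a - 1) * (k : ℕ) + (b - 1) * (k : ℕ) = e * (k : ℕ) by
    rw [← Nat.add_mul]; congr 1; omega]
  rw [h3, h2, he]
  exact diag_core hq0 hq1 e k

theorem stuffle (hq0 : 0 < q) (hq1 : q < 1) {a b : ℕ} (ha : 2 ≤ a) (hb : 2 ≤ b) :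
    qz q a * qz q b = Z q a b + Z q b a + (qz q (a + b) + (1 - q) * qz q (a + b - 1)) := by
  have hpa := summable_phi hq0 hq1 ha
  have hpb := summable_phi hq0 hq1 hb
  have hT : Summable (fun p : ℕ+ × ℕ+ => phi q a p.1 * phi q b p.2) :=
    Summable.mul_of_nonneg hpa hpb (fun k => phi_nonneg hq0 hq1 a k)
      (fun k => phi_nonneg hq0 hq1 b k)
  have h0 : ∀ p : ℕ+ × ℕ+, 0 ≤ phi q a p.1 * phi q b p.2 :=
    fun p => mul_nonneg (phi_nonneg hq0 hq1 a p.1) (phi_nonneg hq0 hq1 b p.2)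
  have h1 : qz q a * qz q b = ∑' p : ℕ+ × ℕ+, phi q a p.1 * phi q b p.2 := by
    rw [qz_eq, qz_eq, ← tsum_mul_right]
    rw [Summable.tsum_prod' hT hT.prod_factor]
    exact tsum_congr fun j => tsum_mul_left.symm
  rw [h1, tsum_three_split hq0 hq1 hT h0]
  congr 1
  · congr 1
    · exact tsum_congr fun p => phi_mul_phi a b p
    · refine tsum_congr fun p => ?_
      rw [mul_comm]
      exact phi_mul_phi b a p
  · have hd : ∀ k : ℕ+, phi q a k * phi q b k
        = phi q (a + b) k + (1 - q) * phi q (a + b - 1) k := diag_decomp hq0 hq1 ha hb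
    rw [tsum_congr hd, Summable.tsum_add (summable_phi hq0 hq1 (by omega))
      ((summable_phi hq0 hq1 (by omega)).mul_left (1 - q)), tsum_mul_left, ← qz_eq, ← qz_eq]

end Stuffle

end QEuler

theorem q_euler_convolution (q : ℝ) (hq0 : 0 < q) (hq1 : q < 1) (m : ℕ) :
    2 * qz1 q (m + 2)
      = (m + 2 : ℝ) * qz q (m + 3) + (1 - q) * (m : ℝ) * qz q (m + 2)
        - ∑ k ∈ Finset.Icc 2 (m + 1), qz q (m + 3 - k) * qz q k := by
  classical
  have hSF : ∑ a ∈ Finset.Icc 2 (m + 2), QEuler.Z q a (m + 3 - a) = qz q (m + 3) :=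
    QEuler.sum_formula (q := q) hq0 hq1 (M := m + 1) (by omega)
  rw [Finset.sum_Icc_succ_top (by omega : 2 ≤ m + 2)] at hSF
  rw [show m + 3 - (m + 2) = 1 by omega] at hSF
  have hrefl : ∑ k ∈ Finset.Icc 2 (m + 1), QEuler.Z q (m + 3 - k) k
      = ∑ k ∈ Finset.Icc 2 (m + 1), QEuler.Z q k (m + 3 - k) := by
    refine Finset.sum_nbij' (fun k => m + 3 - k) (fun k => m + 3 - k) ?_ ?_ ?_ ?_ ?_
    · intro a ha; rw [Finset.mem_Icc] at *; omega
    · intro a ha; rw [Finset.mem_Icc] at *; omega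
    · intro a ha; rw [Finset.mem_Icc] at ha; omega
    · intro a ha; rw [Finset.mem_Icc] at ha; omega
    · intro a ha; rw [Finset.mem_Icc] at ha
      rw [show m + 3 - (m + 3 - a) = a by omega]
  have hstuff : ∑ k ∈ Finset.Icc 2 (m + 1), qz q (m + 3 - k) * qz q k
      = ∑ k ∈ Finset.Icc 2 (m + 1), (QEuler.Z q (m + 3 - k) k + QEuler.Z q k (m + 3 - k)
          + (qz q (m + 3) + (1 - q) * qz q (m + 2))) := by
    refine Finset.sum_congr rfl fun k hk => ?_
    rw [Finset.mem_Icc] at hk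
    have h1 := QEuler.stuffle (q := q) hq0 hq1 (a := m + 3 - k) (b := k) (by omega) hk.1
    rw [show m + 3 - k + k = m + 3 by omega] at h1
    rw [show m + 3 - 1 = m + 2 by omega] at h1
    exact h1
  rw [QEuler.qz1_eq_Z, hstuff, Finset.sum_add_distrib, Finset.sum_add_distrib, hrefl,
    Finset.sum_const, Nat.card_Icc, show m + 1 + 1 - 2 = m from by omega, nsmul_eq_mul]
  linear_combination (2 : ℝ) * hSF
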